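/- Let ω_* ⊂ D be any collection of dyadic cubes and define the stopped square function S_{ω_*}u(x) := (Σ_{Q ∈ ω_*} |u_Q − u_{Q_*}|² 1_Q(x))^{1/2}, where u_Q is the average of u over Q and Q_* is the minimal cube in ω_* strictly containing Q (with Q_* := Q if none exists). Then ‖S_{ω_*}u‖_{L²(R^n)} ≲ ‖u‖_{L²(R^n)}, with implicit constant independent of the collection ω_*. -/

import Mathlib

open MeasureTheory Set ENNReal

noncomputable section

/-- The dyadic cube of generation `k` (side length `2^{-k}`) at position `m` in `ℝⁿ`. -/
def dyadic (n : ℕ) (k : ℤ) (m : Fin n → ℤ) : Set (Fin n → ℝ) :=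
  {x | ∀ i, (m i : ℝ) * 2 ^ (-k) ≤ x i ∧ x i < ((m i : ℝ) + 1) * 2 ^ (-k)}

/-- `par` assigns to each member of the collection `ω` its stopping parent: the minimal member
of `ω` strictly containing it, and the cube itself if no member of `ω` strictly contains it. -/
def IsStoppingParent (n : ℕ) (ω : Set (ℤ × (Fin n → ℤ)))
    (par : ℤ × (Fin n → ℤ) → ℤ × (Fin n → ℤ)) : Prop :=
  ∀ Q ∈ ω,
    (par Q ∈ ω ∧ dyadic n Q.1 Q.2 ⊂ dyadic n (par Q).1 (par Q).2 ∧
      ∀ R ∈ ω, dyadic n Q.1 Q.2 ⊂ dyadic n R.1 R.2 →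
        dyadic n (par Q).1 (par Q).2 ⊆ dyadic n R.1 R.2)
    ∨ (par Q = Q ∧ ∀ R ∈ ω, ¬ dyadic n Q.1 Q.2 ⊂ dyadic n R.1 R.2)

/-- The square `S_{ω_*}u(x)²` of the stopped square function:
`Σ_{Q ∈ ω_*} |u_Q − u_{Q_*}|² 1_Q(x)`. -/
def Ssq (n : ℕ) (ω : Set (ℤ × (Fin n → ℤ))) (par : ℤ × (Fin n → ℤ) → ℤ × (Fin n → ℤ))
    (u : (Fin n → ℝ) → ℝ) (x : Fin n → ℝ) : ℝ≥0∞ :=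
  ∑' Q : ω, (dyadic n Q.val.1 Q.val.2).indicator
    (fun _ => ENNReal.ofReal
      (((⨍ y in dyadic n Q.val.1 Q.val.2, u y) -
        ⨍ y in dyadic n (par Q.val).1 (par Q.val).2, u y) ^ 2)) x

namespace Stmt4Aux


variable {n : ℕ}

lemma dyadic_eq_pi (k : ℤ) (m : Fin n → ℤ) :
    dyadic n k m = Set.univ.pi fun i => Ico ((m i : ℝ) * 2 ^ (-k)) (((m i : ℝ) + 1) * 2 ^ (-k)) := by
  ext x; simp [dyadic, Set.mem_pi, Set.mem_Ico]

lemma measurableSet_dyadic (k : ℤ) (m : Fin n → ℤ) : MeasurableSet (dyadic n k m) := by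
  rw [dyadic_eq_pi]
  exact MeasurableSet.univ_pi fun i => measurableSet_Ico

lemma volume_dyadic (k : ℤ) (m : Fin n → ℤ) :
    volume (dyadic n k m) = ENNReal.ofReal ((2:ℝ) ^ (-k)) ^ n := by
  rw [dyadic_eq_pi, volume_pi_pi]
  have h : ∀ i : Fin n, volume (Ico ((m i : ℝ) * 2 ^ (-k)) (((m i : ℝ) + 1) * 2 ^ (-k)))
      = ENNReal.ofReal ((2:ℝ) ^ (-k)) := by
    intro i; rw [Real.volume_Ico]; congr 1; ring
  rw [Finset.prod_congr rfl (fun i _ => h i), Finset.prod_const, Finset.card_univ,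
    Fintype.card_fin]

lemma volume_dyadic_pos (k : ℤ) (m : Fin n → ℤ) : 0 < volume (dyadic n k m) := by
  rw [volume_dyadic]
  have h2 : (0:ℝ) < (2:ℝ) ^ (-k) := zpow_pos (by norm_num) _
  positivity

lemma volume_dyadic_ne_top (k : ℤ) (m : Fin n → ℤ) : volume (dyadic n k m) ≠ ⊤ := by
  rw [volume_dyadic]
  exact pow_ne_top ofReal_ne_top

lemma corner_mem (k : ℤ) (m : Fin n → ℤ) : (fun i => (m i : ℝ) * 2 ^ (-k)) ∈ dyadic n k m := by
  intro i
  have h2 : (0:ℝ) < (2:ℝ) ^ (-k) := zpow_pos (by norm_num) _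
  refine ⟨le_rfl, ?_⟩
  show (m i : ℝ) * 2 ^ (-k) < ((m i : ℝ) + 1) * 2 ^ (-k)
  nlinarith

lemma dyadic_nonempty (k : ℤ) (m : Fin n → ℤ) : (dyadic n k m).Nonempty :=
  ⟨_, corner_mem k m⟩

/-- one-dimensional fact: if two dyadic intervals intersect and the second has smaller or
equal length, the second is contained in the first. -/
lemma ico_subset_of_mem {k k' : ℤ} (hk : k ≤ k') {a b : ℤ} {x : ℝ}
    (hx1 : (a:ℝ) * 2 ^ (-k) ≤ x) (hx2 : x < ((a:ℝ)+1) * 2 ^ (-k))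
    (hy1 : (b:ℝ) * 2 ^ (-k') ≤ x) (hy2 : x < ((b:ℝ)+1) * 2 ^ (-k')) :
    ∀ y : ℝ, (b:ℝ) * 2 ^ (-k') ≤ y → y < ((b:ℝ)+1) * 2 ^ (-k') →
      (a:ℝ) * 2 ^ (-k) ≤ y ∧ y < ((a:ℝ)+1) * 2 ^ (-k) := by
  have h2 : (0:ℝ) < 2 := by norm_num
  have hpk : (0:ℝ) < (2:ℝ) ^ (-k) := zpow_pos h2 _
  have hpk' : (0:ℝ) < (2:ℝ) ^ (-k') := zpow_pos h2 _
  set d : ℕ := (k' - k).toNat with hd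
  have hdk : (2:ℝ) ^ (-k) = 2 ^ d * 2 ^ (-k') := by
    rw [← zpow_natCast (2:ℝ) d, ← zpow_add₀ (by norm_num : (2:ℝ) ≠ 0)]
    congr 1
    omega
  -- integer inequalities:  a * 2^d ≤ b  and  b + 1 ≤ (a+1) * 2^d
  have hint1 : (a : ℝ) * 2 ^ d ≤ (b : ℝ) := by
    -- from a * 2^{-k} ≤ x < (b+1) 2^{-k'} : a 2^d < b+1
    have h1 : (a:ℝ) * 2 ^ (-k) < ((b:ℝ)+1) * 2 ^ (-k') := lt_of_le_of_lt hx1 hy2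
    rw [hdk] at h1
    have h1' : (a:ℝ) * 2 ^ d < (b:ℝ) + 1 := by
      have := (mul_lt_mul_iff_of_pos_right hpk').mp (by linarith [h1] : ((a:ℝ) * 2 ^ d) * 2 ^ (-k') < ((b:ℝ)+1) * 2 ^ (-k'))
      exact this
    have : (a * 2 ^ d : ℤ) < b + 1 := by exact_mod_cast (by push_cast; linarith : ((a * 2 ^ d : ℤ) : ℝ) < ((b + 1 : ℤ) : ℝ))
    have : (a * 2 ^ d : ℤ) ≤ b := by omega
    exact_mod_cast this
  have hint2 : (b : ℝ) + 1 ≤ ((a : ℝ) + 1) * 2 ^ d := by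
    have h1 : (b:ℝ) * 2 ^ (-k') < ((a:ℝ)+1) * 2 ^ (-k) := lt_of_le_of_lt hy1 hx2
    rw [hdk] at h1
    have h1' : (b:ℝ) < ((a:ℝ)+1) * 2 ^ d := by
      have := (mul_lt_mul_iff_of_pos_right hpk').mp (by linarith [h1] : (b:ℝ) * 2 ^ (-k') < (((a:ℝ)+1) * 2 ^ d) * 2 ^ (-k'))
      exact this
    have : (b : ℤ) < (a + 1) * 2 ^ d := by exact_mod_cast (by push_cast; linarith : ((b:ℤ):ℝ) < (((a+1) * 2 ^ d : ℤ) : ℝ))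
    have : (b : ℤ) + 1 ≤ (a + 1) * 2 ^ d := by omega
    exact_mod_cast (by push_cast; exact_mod_cast this : ((b:ℤ):ℝ) + 1 ≤ (((a+1) * 2 ^ d : ℤ):ℝ))
  intro y hy1' hy2'
  constructor
  · calc (a:ℝ) * 2 ^ (-k) = ((a:ℝ) * 2 ^ d) * 2 ^ (-k') := by rw [hdk]; ring
    _ ≤ (b:ℝ) * 2 ^ (-k') := by
        exact mul_le_mul_of_nonneg_right hint1 hpk'.le
    _ ≤ y := hy1'
  · calc y < ((b:ℝ)+1) * 2 ^ (-k') := hy2'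
    _ ≤ (((a:ℝ)+1) * 2 ^ d) * 2 ^ (-k') := mul_le_mul_of_nonneg_right hint2 hpk'.le
    _ = ((a:ℝ)+1) * 2 ^ (-k) := by rw [hdk]; ring

lemma subset_of_le_of_inter {k k' : ℤ} (hk : k ≤ k') {m : Fin n → ℤ} {m' : Fin n → ℤ}
    (h : (dyadic n k m ∩ dyadic n k' m').Nonempty) : dyadic n k' m' ⊆ dyadic n k m := by
  obtain ⟨x, hx, hx'⟩ := h
  intro y hy i
  exact ico_subset_of_mem hk (hx i).1 (hx i).2 (hx' i).1 (hx' i).2 (y i) (hy i).1 (hy i).2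

lemma nested_or_disjoint (k k' : ℤ) (m m' : Fin n → ℤ) :
    dyadic n k m ⊆ dyadic n k' m' ∨ dyadic n k' m' ⊆ dyadic n k m ∨
      Disjoint (dyadic n k m) (dyadic n k' m') := by
  by_cases hdisj : Disjoint (dyadic n k m) (dyadic n k' m')
  · exact Or.inr (Or.inr hdisj)
  rw [Set.not_disjoint_iff_nonempty_inter] at hdisj
  rcases le_total k k' with hk | hk
  · exact Or.inr (Or.inl (subset_of_le_of_inter hk hdisj))
  · left
    exact subset_of_le_of_inter hk (by rwa [Set.inter_comm] at hdisj)

lemma coord_mono {k k' : ℤ} {m m' : Fin n → ℤ}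
    (h : dyadic n k m ⊆ dyadic n k' m') (i : Fin n) {t : ℝ}
    (ht : t ∈ Ico ((m i : ℝ) * 2 ^ (-k)) (((m i : ℝ) + 1) * 2 ^ (-k))) :
    t ∈ Ico ((m' i : ℝ) * 2 ^ (-k')) (((m' i : ℝ) + 1) * 2 ^ (-k')) := by
  set x : Fin n → ℝ := Function.update (fun j => (m j : ℝ) * 2 ^ (-k)) i t with hx
  have hxm : x ∈ dyadic n k m := by
    intro j
    rcases eq_or_ne j i with rfl | hj
    · rw [hx]; simp only [Function.update_self]; exact ⟨ht.1, ht.2⟩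
    · rw [hx]; simp only [Function.update_of_ne hj]
      exact corner_mem k m j
  have := h hxm i
  rwa [hx, Function.update_self] at this

lemma dyadic_injective (hn : 0 < n) {k k' : ℤ} {m m' : Fin n → ℤ}
    (h : dyadic n k m = dyadic n k' m') : k = k' ∧ m = m' := by
  have h2 : (0:ℝ) < 2 := by norm_num
  have hpk : (0:ℝ) < (2:ℝ) ^ (-k) := zpow_pos h2 _
  have hpk' : (0:ℝ) < (2:ℝ) ^ (-k') := zpow_pos h2 _
  have hcoord : ∀ i : Fin n,
      Ico ((m i : ℝ) * 2 ^ (-k)) (((m i : ℝ) + 1) * 2 ^ (-k)) =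
      Ico ((m' i : ℝ) * 2 ^ (-k')) (((m' i : ℝ) + 1) * 2 ^ (-k')) := by
    intro i
    ext t
    exact ⟨fun ht => coord_mono h.le i ht, fun ht => coord_mono h.ge i ht⟩
  have i0 : Fin n := ⟨0, hn⟩
  have hend := (Set.Ico_eq_Ico_iff (Or.inl (by nlinarith))).mp (hcoord i0)
  have hlen : (2:ℝ) ^ (-k) = (2:ℝ) ^ (-k') := by
    have e1 := hend.1
    have e2 := hend.2
    nlinarith [e1, e2]
  have hkk : k = k' := by
    have := zpow_right_injective₀ h2 (by norm_num : (2:ℝ) ≠ 1) hlen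
    omega
  subst hkk
  refine ⟨rfl, funext fun i => ?_⟩
  have hend2 := (Set.Ico_eq_Ico_iff (Or.inl (by nlinarith))).mp (hcoord i)
  have : (m i : ℝ) = m' i := by
    have := hend2.1
    exact mul_right_cancel₀ hpk.ne' this
  exact_mod_cast this


def cb {n : ℕ} (Q : ℤ × (Fin n → ℤ)) : Set (Fin n → ℝ) := dyadic n Q.1 Q.2

variable {n : ℕ}

lemma measurableSet_cb (Q : ℤ × (Fin n → ℤ)) : MeasurableSet (cb Q) :=
  measurableSet_dyadic Q.1 Q.2

lemma volume_cb_pos (Q : ℤ × (Fin n → ℤ)) : volume (cb Q) ≠ 0 :=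
  (volume_dyadic_pos Q.1 Q.2).ne'

lemma volume_cb_ne_top (Q : ℤ × (Fin n → ℤ)) : volume (cb Q) ≠ ⊤ :=
  volume_dyadic_ne_top Q.1 Q.2

lemma cb_nonempty (Q : ℤ × (Fin n → ℤ)) : (cb Q).Nonempty :=
  dyadic_nonempty Q.1 Q.2

lemma cb_nested_or_disjoint (Q R : ℤ × (Fin n → ℤ)) :
    cb Q ⊆ cb R ∨ cb R ⊆ cb Q ∨ Disjoint (cb Q) (cb R) := by
  rcases nested_or_disjoint Q.1 R.1 Q.2 R.2 with h | h | h
  · exact Or.inl h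
  · exact Or.inr (Or.inl h)
  · exact Or.inr (Or.inr h)

lemma cb_injective (hn : 0 < n) {Q R : ℤ × (Fin n → ℤ)} (h : cb Q = cb R) : Q = R := by
  obtain ⟨h1, h2⟩ := dyadic_injective hn h
  exact Prod.ext h1 h2


variable {n : ℕ}

def Iq (u : (Fin n → ℝ) → ℝ) (c : ℝ) (S : Set (Fin n → ℝ)) : ℝ :=
  ∫ x in S, (u x - c) ^ 2

def av (u : (Fin n → ℝ) → ℝ) (S : Set (Fin n → ℝ)) : ℝ := ⨍ y in S, u y

lemma integrableOn_u {u : (Fin n → ℝ) → ℝ} (hu : MemLp u 2 volume)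
    {S : Set (Fin n → ℝ)} (hSf : volume S ≠ ⊤) : IntegrableOn u S volume := by
  haveI : IsFiniteMeasure (volume.restrict S) :=
    ⟨by rw [Measure.restrict_apply_univ]; exact hSf.lt_top⟩
  exact (hu.restrict S).integrable (by norm_num)

lemma integrableOn_sq {u : (Fin n → ℝ) → ℝ} (hu : MemLp u 2 volume)
    (S : Set (Fin n → ℝ)) : IntegrableOn (fun x => u x ^ 2) S volume :=
  hu.integrable_sq.integrableOn

lemma integrableOn_dev_sq {u : (Fin n → ℝ) → ℝ} (hu : MemLp u 2 volume)
    {S : Set (Fin n → ℝ)} (hSm : MeasurableSet S) (hSf : volume S ≠ ⊤) (c : ℝ) :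
    IntegrableOn (fun x => (u x - c) ^ 2) S volume := by
  have h : IntegrableOn (fun x => u x ^ 2 - (2 * c) * u x + c ^ 2) S volume := by
    refine ((integrableOn_sq hu S).sub ((integrableOn_u hu hSf).const_mul (2 * c))).add ?_
    exact integrableOn_const hSf
  exact h.congr_fun (fun x _ => by ring) hSm

lemma K1 {u : (Fin n → ℝ) → ℝ} (hu : MemLp u 2 volume)
    {S : Set (Fin n → ℝ)} (hSf : volume S ≠ ⊤) (c : ℝ) :
    Iq u c S = (∫ x in S, u x ^ 2) - 2 * c * (∫ x in S, u x) + c ^ 2 * (volume S).toReal := by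
  have h1 : Iq u c S = ∫ x in S, (u x ^ 2 - (2 * c) * u x + c ^ 2) :=
    integral_congr_ae (ae_of_all _ fun x => by ring)
  have i2 : IntegrableOn (fun x => 2 * c * u x) S volume :=
    (integrableOn_u hu hSf).const_mul (2 * c)
  have i1 : IntegrableOn (fun x => u x ^ 2 - 2 * c * u x) S volume :=
    (integrableOn_sq hu S).sub i2
  have i3 : IntegrableOn (fun _ : Fin n → ℝ => c ^ 2) S volume :=
    integrableOn_const hSf
  rw [h1, integral_add i1 i3, integral_sub (integrableOn_sq hu S) i2,
    integral_const_mul, setIntegral_const]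
  simp only [smul_eq_mul, measureReal_def]
  ring

lemma integral_eq_av (u : (Fin n → ℝ) → ℝ) {S : Set (Fin n → ℝ)}
    (hSf : volume S ≠ ⊤) (hS0 : volume S ≠ 0) :
    ∫ x in S, u x = (volume S).toReal * av u S := by
  rw [av, setAverage_eq, measureReal_def, smul_eq_mul, ← mul_assoc, mul_inv_cancel₀, one_mul]
  exact ENNReal.toReal_ne_zero.mpr ⟨hS0, hSf⟩

lemma K2 {u : (Fin n → ℝ) → ℝ} (hu : MemLp u 2 volume) {S : Set (Fin n → ℝ)}
    (hSf : volume S ≠ ⊤) (hS0 : volume S ≠ 0) (c : ℝ) :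
    Iq u c S = Iq u (av u S) S + (av u S - c) ^ 2 * (volume S).toReal := by
  have e := integral_eq_av u hSf hS0
  rw [K1 hu hSf, K1 hu hSf, e]
  ring

lemma Iq_nonneg (u : (Fin n → ℝ) → ℝ) {S : Set (Fin n → ℝ)} (hSm : MeasurableSet S) (c : ℝ) :
    0 ≤ Iq u c S :=
  setIntegral_nonneg hSm fun x _ => sq_nonneg _

lemma K3 {u : (Fin n → ℝ) → ℝ} (hu : MemLp u 2 volume) {S : Set (Fin n → ℝ)}
    (hSf : volume S ≠ ⊤) (hS0 : volume S ≠ 0) (c : ℝ) :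
    Iq u (av u S) S ≤ Iq u c S := by
  rw [K2 hu hSf hS0 c]
  have : 0 ≤ (av u S - c) ^ 2 * (volume S).toReal :=
    mul_nonneg (sq_nonneg _) ENNReal.toReal_nonneg
  linarith

lemma Iq_le_int_sq {u : (Fin n → ℝ) → ℝ} (hu : MemLp u 2 volume) {S : Set (Fin n → ℝ)}
    (hSf : volume S ≠ ⊤) (hS0 : volume S ≠ 0) :
    Iq u (av u S) S ≤ ∫ x in S, u x ^ 2 := by
  have h := K3 hu hSf hS0 0
  have h2 : Iq u 0 S = ∫ x in S, u x ^ 2 := by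
    unfold Iq; exact integral_congr_ae (ae_of_all _ fun x => by ring)
  linarith

lemma Iq_sum_le {u : (Fin n → ℝ) → ℝ} (hu : MemLp u 2 volume)
    {ι : Type*} (ℛ : Finset ι) (Sf : ι → Set (Fin n → ℝ))
    (hm : ∀ R ∈ ℛ, MeasurableSet (Sf R)) (hd : (↑ℛ : Set ι).Pairwise (Function.onFun Disjoint Sf))
    {T : Set (Fin n → ℝ)} (hTm : MeasurableSet T) (hTf : volume T ≠ ⊤)
    (hsub : ∀ R ∈ ℛ, Sf R ⊆ T) (c : ℝ) :
    ∑ R ∈ ℛ, Iq u c (Sf R) ≤ Iq u c T := by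
  have hint : ∀ R ∈ ℛ, IntegrableOn (fun x => (u x - c) ^ 2) (Sf R) volume := by
    intro R hR
    exact (integrableOn_dev_sq hu hTm hTf c).mono_set (hsub R hR)
  have : ∑ R ∈ ℛ, Iq u c (Sf R) = ∫ x in ⋃ R ∈ ℛ, Sf R, (u x - c) ^ 2 :=
    (integral_biUnion_finset ℛ hm hd hint).symm
  rw [this]
  exact setIntegral_mono_set (integrableOn_dev_sq hu hTm hTf c)
    (ae_of_all _ fun x => sq_nonneg _) (Set.iUnion₂_subset hsub).eventuallyLE


/-- existence of a maximal element above a given one -/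
lemma exists_max_above (ℋ : Finset (ℤ × (Fin n → ℤ))) {A : ℤ × (Fin n → ℤ)} (hA : A ∈ ℋ) :
    ∃ R, (R ∈ ℋ ∧ ∀ S ∈ ℋ, ¬ cb R ⊂ cb S) ∧ cb A ⊆ cb R := by
  classical
  set ℋ' := ℋ.filter (fun S => cb A ⊆ cb S) with hℋ'
  have hA' : A ∈ ℋ' := by simp [hℋ', hA]
  obtain ⟨s, hs, hmax⟩ : ∃ s ∈ ℋ'.image cb, ∀ x ∈ ℋ'.image cb, ¬ s < x := by
    obtain ⟨s, hs, hm⟩ := Finset.exists_maximal (s := ℋ'.image cb) ⟨_, Finset.mem_image_of_mem _ hA'⟩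
    exact ⟨s, hs, fun x hx hlt => not_le_of_gt hlt (hm hx hlt.le)⟩
  obtain ⟨R, hR, hRs⟩ := Finset.mem_image.mp hs
  have hRℋ : R ∈ ℋ := (Finset.mem_filter.mp hR).1
  have hAR : cb A ⊆ cb R := (Finset.mem_filter.mp hR).2
  refine ⟨R, ⟨hRℋ, ?_⟩, hAR⟩
  intro S hS hcon
  have hS' : S ∈ ℋ' := Finset.mem_filter.mpr ⟨hS, hAR.trans hcon.subset⟩
  exact hmax (cb S) (Finset.mem_image_of_mem _ hS') (hRs ▸ hcon)

/-- distinct maximal elements have disjoint cubes -/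
lemma max_disjoint (hn : 0 < n) (ℋ : Finset (ℤ × (Fin n → ℤ)))
    {R R' : ℤ × (Fin n → ℤ)} (hR : R ∈ ℋ ∧ ∀ S ∈ ℋ, ¬ cb R ⊂ cb S)
    (hR' : R' ∈ ℋ ∧ ∀ S ∈ ℋ, ¬ cb R' ⊂ cb S) (hne : R ≠ R') :
    Disjoint (cb R) (cb R') := by
  have hcb : cb R ≠ cb R' := fun h => hne (cb_injective hn h)
  rcases cb_nested_or_disjoint R R' with h | h | h
  · exact absurd (ssubset_of_subset_of_ne h hcb) (hR.2 R' hR'.1)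
  · exact absurd (ssubset_of_subset_of_ne h (Ne.symm hcb)) (hR'.2 R hR.1)
  · exact h

/-- generic grouping of a sum by a "unique representative" relation -/
lemma sum_group {α β : Type} [DecidableEq β] (F : Finset α) (ℛ : Finset β)
    (p : α → β → Prop) [∀ a b, Decidable (p a b)] (f : α → ℝ)
    (hex : ∀ Q ∈ F, ∃ R ∈ ℛ, p Q R)
    (huniq : ∀ Q ∈ F, ∀ R ∈ ℛ, ∀ R' ∈ ℛ, p Q R → p Q R' → R = R') :
    ∑ Q ∈ F, f Q = ∑ R ∈ ℛ, ∑ Q ∈ F.filter (fun Q => p Q R), f Q := by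
  classical
  rcases F.eq_empty_or_nonempty with rfl | ⟨Q₀, hQ₀⟩
  · simp
  obtain ⟨R₀, hR₀, -⟩ := hex Q₀ hQ₀
  set g : α → β := fun Q => if h : ∃ R, R ∈ ℛ ∧ p Q R then h.choose else R₀ with hg
  have hgmem : ∀ Q ∈ F, g Q ∈ ℛ ∧ p Q (g Q) := by
    intro Q hQ
    obtain ⟨R, hR1, hR2⟩ := hex Q hQ
    rw [hg]
    simp only
    rw [dif_pos ⟨R, hR1, hR2⟩]
    exact (Exists.choose_spec (⟨R, hR1, hR2⟩ : ∃ R, R ∈ ℛ ∧ p Q R))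
  have := Finset.sum_fiberwise_of_maps_to (g := g) (fun Q hQ => (hgmem Q hQ).1) f
  rw [← this]
  refine Finset.sum_congr rfl fun R hR => ?_
  refine Finset.sum_congr ?_ (fun _ _ => rfl)
  ext Q
  simp only [Finset.mem_filter]
  constructor
  · rintro ⟨hQ, rfl⟩
    exact ⟨hQ, (hgmem Q hQ).2⟩
  · rintro ⟨hQ, hp⟩
    exact ⟨hQ, huniq Q hQ (g Q) (hgmem Q hQ).1 R hR (hgmem Q hQ).2 hp⟩


def tm (u : (Fin n → ℝ) → ℝ) (par : ℤ × (Fin n → ℤ) → ℤ × (Fin n → ℤ))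
    (Q : ℤ × (Fin n → ℤ)) : ℝ :=
  (av u (cb Q) - av u (cb (par Q))) ^ 2 * (volume (cb Q)).toReal

lemma tm_nonneg (u par Q) : 0 ≤ tm (n := n) u par Q :=
  mul_nonneg (sq_nonneg _) ENNReal.toReal_nonneg

lemma hmin {ω : Set (ℤ × (Fin n → ℤ))} {par} (hpar : IsStoppingParent n ω par)
    {Q R} (hQ : Q ∈ ω) (hR : R ∈ ω) (hQR : cb Q ⊂ cb R) : cb (par Q) ⊆ cb R := by
  rcases hpar Q hQ with ⟨-, -, h3⟩ | ⟨-, h2⟩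
  · exact h3 R hR hQR
  · exact absurd hQR (h2 R hR)

lemma hparmem {ω : Set (ℤ × (Fin n → ℤ))} {par} (hpar : IsStoppingParent n ω par)
    {Q} (hQ : Q ∈ ω) (hst : cb Q ⊂ cb (par Q)) : par Q ∈ ω := by
  rcases hpar Q hQ with ⟨h1, -, -⟩ | ⟨he, -⟩
  · exact h1
  · rw [he] at hst; exact absurd hst (ssubset_irrefl _)

lemma lemB (hn : 0 < n) {ω : Set (ℤ × (Fin n → ℤ))} {par}
    (hpar : IsStoppingParent n ω par) {u : (Fin n → ℝ) → ℝ} (hu : MemLp u 2 volume) :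
    ∀ N : ℕ, ∀ F : Finset (ℤ × (Fin n → ℤ)), F.card ≤ N →
      (∀ Q ∈ F, Q ∈ ω ∧ cb Q ⊂ cb (par Q)) →
      ∀ G, G ∈ ω → (∀ Q ∈ F, cb (par Q) ⊆ cb G) →
      ∑ Q ∈ F, tm u par Q ≤ Iq u (av u (cb G)) (cb G) := by
  intro N
  induction N with
  | zero =>
    intro F hcard _ G _ _
    have : F = ∅ := Finset.card_eq_zero.mp (Nat.le_zero.mp hcard)
    subst this
    simpa using Iq_nonneg u (measurableSet_cb G) _
  | succ N ih =>
    intro F hcard hF G hG hFG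
    classical
    rcases F.eq_empty_or_nonempty with rfl | hFne
    · simpa using Iq_nonneg u (measurableSet_cb G) _
    set 𝒢 := F.image par with h𝒢
    set ℳ := 𝒢.filter (fun H => ∀ S ∈ 𝒢, ¬ cb H ⊂ cb S) with hℳ
    have h𝒢mem : ∀ H ∈ 𝒢, H ∈ ω ∧ ∃ Q₀ ∈ F, par Q₀ = H := by
      intro H hH
      obtain ⟨Q₀, hQ₀, rfl⟩ := Finset.mem_image.mp hH
      exact ⟨hparmem hpar (hF Q₀ hQ₀).1 (hF Q₀ hQ₀).2, Q₀, hQ₀, rfl⟩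
    have hℳmax : ∀ H ∈ ℳ, H ∈ 𝒢 ∧ ∀ S ∈ 𝒢, ¬ cb H ⊂ cb S := fun H hH =>
      Finset.mem_filter.mp hH
    -- the grouped sum
    have hgroup : ∑ Q ∈ F, tm u par Q =
        ∑ H ∈ ℳ, ∑ Q ∈ F.filter (fun Q => cb (par Q) ⊆ cb H), tm u par Q := by
      refine sum_group F ℳ _ _ ?_ ?_
      · intro Q hQ
        obtain ⟨R, ⟨hR1, hR2⟩, hR3⟩ :=
          exists_max_above 𝒢 (Finset.mem_image_of_mem par hQ)
        exact ⟨R, Finset.mem_filter.mpr ⟨hR1, hR2⟩, hR3⟩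
      · intro Q hQ R hR R' hR' hp hp'
        by_contra hne
        have hd := max_disjoint hn 𝒢 (hℳmax R hR) (hℳmax R' hR') hne
        obtain ⟨x, hx⟩ := cb_nonempty (par Q)
        exact (hd.ne_of_mem (hp hx) (hp' hx)) rfl
    -- the key claim for a single maximal parent H
    have key : ∀ H ∈ ℳ, ∑ Q ∈ F.filter (fun Q => cb (par Q) ⊆ cb H), tm u par Q ≤
        Iq u (av u (cb H)) (cb H) := by
      intro H hH
      obtain ⟨hH𝒢, hHmax⟩ := hℳmax H hH
      obtain ⟨hHω, Q₀, hQ₀F, hQ₀H⟩ := h𝒢mem H hH𝒢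
      set FH := F.filter (fun Q => cb (par Q) ⊆ cb H) with hFH
      set F₁ := FH.filter (fun Q => cb (par Q) = cb H) with hF₁
      set F₂ := FH.filter (fun Q => ¬ cb (par Q) = cb H) with hF₂
      have hQ₀F₁ : Q₀ ∈ F₁ := by
        rw [hF₁, hFH]
        simp [hQ₀F, hQ₀H]
      set ℋ := F₁ ∪ F₂.image par with hℋ
      set ℛ := ℋ.filter (fun R => ∀ S ∈ ℋ, ¬ cb R ⊂ cb S) with hℛ
      have r1 : ∀ R ∈ ℋ, R ∈ ω ∧ cb R ⊆ cb H := by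
        intro R hR
        rcases Finset.mem_union.mp hR with h1 | h2
        · have hRF : R ∈ F := Finset.mem_filter.mp (Finset.mem_filter.mp h1).1 |>.1
          have heq : cb (par R) = cb H := (Finset.mem_filter.mp h1).2
          exact ⟨(hF R hRF).1, (heq ▸ (hF R hRF).2).subset⟩
        · obtain ⟨Q', hQ', rfl⟩ := Finset.mem_image.mp h2
          have hQ'FH : Q' ∈ FH := (Finset.mem_filter.mp hQ').1
          have hsub : cb (par Q') ⊆ cb H := (Finset.mem_filter.mp hQ'FH).2
          have hQ'F : Q' ∈ F := (Finset.mem_filter.mp hQ'FH).1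
          exact ⟨hparmem hpar (hF Q' hQ'F).1 (hF Q' hQ'F).2, hsub⟩
      have r3 : F₁ ⊆ ℛ := by
        intro Q hQ₁
        have hQℋ : Q ∈ ℋ := Finset.mem_union_left _ hQ₁
        refine Finset.mem_filter.mpr ⟨hQℋ, ?_⟩
        intro S hS hcon
        have hSω := (r1 S hS).1
        have hQF : Q ∈ F := (Finset.mem_filter.mp (Finset.mem_filter.mp hQ₁).1).1
        have heq : cb (par Q) = cb H := (Finset.mem_filter.mp hQ₁).2
        have h1 : cb (par Q) ⊆ cb S := hmin hpar (hF Q hQF).1 hSω hcon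
        have h2 : cb S ≠ cb H := by
          rcases Finset.mem_union.mp hS with hS1 | hS2
          · have hSF : S ∈ F := (Finset.mem_filter.mp (Finset.mem_filter.mp hS1).1).1
            have : cb S ⊂ cb H := (Finset.mem_filter.mp hS1).2 ▸ (hF S hSF).2
            exact this.ne
          · obtain ⟨Q', hQ', rfl⟩ := Finset.mem_image.mp hS2
            exact (Finset.mem_filter.mp hQ').2
        have h3 : cb S ⊆ cb H := (r1 S hS).2
        exact h2 (subset_antisymm h3 (heq ▸ h1))
      have hgroup2 : ∑ Q ∈ F₂, tm u par Q =
          ∑ R ∈ ℛ, ∑ Q ∈ F₂.filter (fun Q => cb (par Q) ⊆ cb R), tm u par Q := by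
        refine sum_group F₂ ℛ _ _ ?_ ?_
        · intro Q hQ
          obtain ⟨R, ⟨hR1, hR2⟩, hR3⟩ := exists_max_above ℋ
            (Finset.mem_union_right _ (Finset.mem_image_of_mem par hQ))
          exact ⟨R, Finset.mem_filter.mpr ⟨hR1, hR2⟩, hR3⟩
        · intro Q hQ R hR R' hR' hp hp'
          by_contra hne
          have hd := max_disjoint hn ℋ (Finset.mem_filter.mp hR) (Finset.mem_filter.mp hR') hne
          obtain ⟨x, hx⟩ := cb_nonempty (par Q)
          exact (hd.ne_of_mem (hp hx) (hp' hx)) rfl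
      have hIH : ∀ R ∈ ℛ, ∑ Q ∈ F₂.filter (fun Q => cb (par Q) ⊆ cb R), tm u par Q ≤
          Iq u (av u (cb R)) (cb R) := by
        intro R hR
        have hRω := (r1 R (Finset.mem_filter.mp hR).1).1
        refine ih _ ?_ ?_ R hRω ?_
        · have hsub : F₂.filter (fun Q => cb (par Q) ⊆ cb R) ⊆ F.erase Q₀ := by
            intro Q hQ
            have hQ₂ : Q ∈ F₂ := (Finset.mem_filter.mp hQ).1
            have hQF : Q ∈ F := (Finset.mem_filter.mp (Finset.mem_filter.mp hQ₂).1).1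
            refine Finset.mem_erase.mpr ⟨?_, hQF⟩
            rintro rfl
            exact (Finset.mem_filter.mp hQ₂).2 (by rw [hQ₀H])
          calc (F₂.filter (fun Q => cb (par Q) ⊆ cb R)).card
              ≤ (F.erase Q₀).card := Finset.card_le_card hsub
            _ = F.card - 1 := Finset.card_erase_of_mem hQ₀F
            _ ≤ N := by omega
        · intro Q hQ
          exact hF Q (Finset.mem_filter.mp (Finset.mem_filter.mp (Finset.mem_filter.mp hQ).1).1).1
        · intro Q hQ
          exact (Finset.mem_filter.mp hQ).2
      have perR : ∀ R ∈ ℛ,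
          (if R ∈ F₁ then tm u par R else 0) +
            ∑ Q ∈ F₂.filter (fun Q => cb (par Q) ⊆ cb R), tm u par Q ≤
          Iq u (av u (cb H)) (cb R) := by
        intro R hR
        have hK2 := K2 hu (volume_cb_ne_top R) (volume_cb_pos R) (av u (cb H))
        by_cases hRF₁ : R ∈ F₁
        · rw [if_pos hRF₁]
          have heq : cb (par R) = cb H := (Finset.mem_filter.mp hRF₁).2
          have htm : tm u par R = (av u (cb R) - av u (cb H)) ^ 2 * (volume (cb R)).toReal := by
            unfold tm; rw [heq]
          have := hIH R hR
          rw [htm, hK2]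
          linarith
        · rw [if_neg hRF₁, zero_add]
          calc ∑ Q ∈ F₂.filter (fun Q => cb (par Q) ⊆ cb R), tm u par Q
              ≤ Iq u (av u (cb R)) (cb R) := hIH R hR
            _ ≤ Iq u (av u (cb H)) (cb R) :=
                K3 hu (volume_cb_ne_top R) (volume_cb_pos R) _
      have hsplit : ∑ Q ∈ FH, tm u par Q = ∑ Q ∈ F₁, tm u par Q + ∑ Q ∈ F₂, tm u par Q := by
        rw [hF₁, hF₂]
        exact (Finset.sum_filter_add_sum_filter_not FH _ _).symm
      have hF₁sum : ∑ Q ∈ F₁, tm u par Q =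
          ∑ R ∈ ℛ, (if R ∈ F₁ then tm u par R else 0) := by
        rw [Finset.sum_ite_mem, Finset.inter_eq_right.mpr r3]
      calc ∑ Q ∈ FH, tm u par Q
          = ∑ R ∈ ℛ, ((if R ∈ F₁ then tm u par R else 0) +
              ∑ Q ∈ F₂.filter (fun Q => cb (par Q) ⊆ cb R), tm u par Q) := by
            rw [hsplit, hF₁sum, hgroup2, Finset.sum_add_distrib]
        _ ≤ ∑ R ∈ ℛ, Iq u (av u (cb H)) (cb R) := Finset.sum_le_sum perR
        _ ≤ Iq u (av u (cb H)) (cb H) := by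
            refine Iq_sum_le hu ℛ (fun R => cb R) (fun R _ => measurableSet_cb R) ?_
              (measurableSet_cb H) (volume_cb_ne_top H)
              (fun R hR => (r1 R (Finset.mem_filter.mp hR).1).2) _
            intro R hR R' hR' hne
            show Disjoint (cb R) (cb R')
            exact max_disjoint hn ℋ (Finset.mem_filter.mp (Finset.mem_coe.mp hR))
              (Finset.mem_filter.mp (Finset.mem_coe.mp hR')) hne
    rw [hgroup]
    calc ∑ H ∈ ℳ, ∑ Q ∈ F.filter (fun Q => cb (par Q) ⊆ cb H), tm u par Q
        ≤ ∑ H ∈ ℳ, Iq u (av u (cb H)) (cb H) := Finset.sum_le_sum key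
      _ ≤ ∑ H ∈ ℳ, Iq u (av u (cb G)) (cb H) :=
          Finset.sum_le_sum (fun H _ => K3 hu (volume_cb_ne_top H) (volume_cb_pos H) _)
      _ ≤ Iq u (av u (cb G)) (cb G) := by
          refine Iq_sum_le hu ℳ (fun H => cb H) (fun H _ => measurableSet_cb H) ?_
            (measurableSet_cb G) (volume_cb_ne_top G) ?_ _
          · intro H hH H' hH' hne
            show Disjoint (cb H) (cb H')
            exact max_disjoint hn 𝒢 (hℳmax H (Finset.mem_coe.mp hH))
              (hℳmax H' (Finset.mem_coe.mp hH')) hne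
          · intro H hH
            obtain ⟨-, Q₁, hQ₁F, hQ₁H⟩ := h𝒢mem H (hℳmax H hH).1
            exact hQ₁H ▸ hFG Q₁ hQ₁F

end Stmt4Aux

namespace Stmt4Aux

/-- sum of integrals of `u²` over disjoint sets is at most the total integral -/
lemma sum_int_sq_le {n : ℕ} {u : (Fin n → ℝ) → ℝ} (hu : MemLp u 2 volume)
    {ι : Type} (ℛ : Finset ι) (Sf : ι → Set (Fin n → ℝ))
    (hm : ∀ R ∈ ℛ, MeasurableSet (Sf R)) (hd : (↑ℛ : Set ι).Pairwise (Function.onFun Disjoint Sf)) :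
    ∑ R ∈ ℛ, ∫ x in Sf R, u x ^ 2 ≤ ∫ x, u x ^ 2 := by
  rw [← integral_biUnion_finset ℛ hm hd (fun R _ => integrableOn_sq hu _)]
  conv_rhs => rw [← setIntegral_univ (f := fun x => u x ^ 2) (μ := volume)]
  exact setIntegral_mono_set hu.integrable_sq.integrableOn
    (ae_of_all _ fun x => sq_nonneg _) (subset_univ _).eventuallyLE

end Stmt4Aux

set_option maxHeartbeats 2000000 in
open Stmt4Aux in
/-- `‖S_{ω_*}u‖_{L²} ≲ ‖u‖_{L²}`, uniformly in the collection `ω_*`. -/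
theorem stmt4 (n : ℕ) :
    ∃ C : ℝ≥0∞, C ≠ ⊤ ∧
      ∀ (ω : Set (ℤ × (Fin n → ℤ))) (par : ℤ × (Fin n → ℤ) → ℤ × (Fin n → ℤ)),
        IsStoppingParent n ω par →
        ∀ u : (Fin n → ℝ) → ℝ, MemLp u 2 volume →
          ∫⁻ x, Ssq n ω par u x ≤ C * ∫⁻ x, (‖u x‖₊ : ℝ≥0∞) ^ 2 := by
  classical
  refine ⟨1, one_ne_top, ?_⟩
  intro ω par hpar u hu
  rcases Nat.eq_zero_or_pos n with hn0 | hn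
  · -- degenerate case `n = 0`: every dyadic cube is `univ`, so `par Q = Q` and `Ssq = 0`
    subst hn0
    have hcube : ∀ (k : ℤ) (m : Fin 0 → ℤ), dyadic 0 k m = (univ : Set (Fin 0 → ℝ)) := by
      intro k m; ext x
      simp only [dyadic, mem_setOf_eq, mem_univ, iff_true]
      exact fun i => i.elim0
    have hparid : ∀ Q ∈ ω, par Q = Q := by
      intro Q hQ
      rcases hpar Q hQ with ⟨-, hst, -⟩ | ⟨he, -⟩
      · rw [hcube, hcube] at hst; exact absurd hst (ssubset_irrefl _)
      · exact he
    have hS : ∀ x, Ssq 0 ω par u x = 0 := by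
      intro x
      unfold Ssq
      refine (tsum_congr fun Q => ?_).trans tsum_zero
      rw [hparid Q.val Q.property]
      simp
    simp only [hS, lintegral_zero]
    exact bot_le
  · -- main case
    have h1 : ∫⁻ x, Ssq n ω par u x =
        ∑' Q : ω, ENNReal.ofReal ((av u (cb Q.val) - av u (cb (par Q.val))) ^ 2) *
          volume (cb Q.val) := by
      unfold Ssq
      have h := lintegral_tsum (μ := volume)
        (f := fun (Q : ω) (x : Fin n → ℝ) => (dyadic n Q.val.1 Q.val.2).indicator
          (fun _ => ENNReal.ofReal
            (((⨍ y in dyadic n Q.val.1 Q.val.2, u y) -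
              ⨍ y in dyadic n (par Q.val).1 (par Q.val).2, u y) ^ 2)) x)
        (fun Q => (measurable_const.indicator
          (measurableSet_dyadic Q.val.1 Q.val.2)).aemeasurable)
      rw [h]
      exact tsum_congr fun Q =>
        lintegral_indicator_const (measurableSet_dyadic Q.val.1 Q.val.2) _
    rw [h1, ENNReal.tsum_eq_iSup_sum, one_mul]
    refine iSup_le fun s => ?_
    suffices hclaim : ∀ F : Finset (ℤ × (Fin n → ℤ)), (∀ Q ∈ F, Q ∈ ω) →
        ∑ Q ∈ F, ENNReal.ofReal ((av u (cb Q) - av u (cb (par Q))) ^ 2) * volume (cb Q) ≤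
          ∫⁻ x, (‖u x‖₊ : ℝ≥0∞) ^ 2 by
      have hmem : ∀ Q ∈ s.image Subtype.val, Q ∈ ω := by
        intro Q hQ
        obtain ⟨Q', -, rfl⟩ := Finset.mem_image.mp hQ
        exact Q'.property
      have := hclaim (s.image Subtype.val) hmem
      rwa [Finset.sum_image (fun x _ y _ h => Subtype.val_injective h)] at this
    intro F hFω
    -- terms with `par Q = Q` vanish
    have hns : ∀ Q ∈ F,
        ENNReal.ofReal ((av u (cb Q) - av u (cb (par Q))) ^ 2) * volume (cb Q) ≠ 0 →
        cb Q ⊂ cb (par Q) := by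
      intro Q hQ hne
      by_contra hnot
      apply hne
      rcases hpar Q (hFω Q hQ) with ⟨-, hst, -⟩ | ⟨he, -⟩
      · exact absurd hst hnot
      · rw [he]
        simp
    rw [← Finset.sum_filter_of_ne hns]
    set Fp := F.filter (fun Q => cb Q ⊂ cb (par Q)) with hFp
    have hFpprop : ∀ Q ∈ Fp, Q ∈ ω ∧ cb Q ⊂ cb (par Q) := fun Q hQ =>
      ⟨hFω Q (Finset.mem_filter.mp hQ).1, (Finset.mem_filter.mp hQ).2⟩
    have hconv : ∑ Q ∈ Fp,
        ENNReal.ofReal ((av u (cb Q) - av u (cb (par Q))) ^ 2) * volume (cb Q) =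
        ENNReal.ofReal (∑ Q ∈ Fp, tm u par Q) := by
      rw [ENNReal.ofReal_sum_of_nonneg (fun Q _ => tm_nonneg u par Q)]
      refine Finset.sum_congr rfl fun Q _ => ?_
      unfold tm
      rw [ENNReal.ofReal_mul (sq_nonneg _), ENNReal.ofReal_toReal (volume_cb_ne_top Q)]
    rw [hconv]
    have hreal : ∑ Q ∈ Fp, tm u par Q ≤ ∫ x, u x ^ 2 := by
      rcases Fp.eq_empty_or_nonempty with he | hne
      · rw [he, Finset.sum_empty]
        exact integral_nonneg fun x => sq_nonneg _
      set 𝒢 := Fp.image par with h𝒢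
      set ℳ := 𝒢.filter (fun H => ∀ S ∈ 𝒢, ¬ cb H ⊂ cb S) with hℳ
      have h𝒢mem : ∀ H ∈ 𝒢, H ∈ ω ∧ ∃ Q₀ ∈ Fp, par Q₀ = H := by
        intro H hH
        obtain ⟨Q₀, hQ₀, rfl⟩ := Finset.mem_image.mp hH
        exact ⟨hparmem hpar (hFpprop Q₀ hQ₀).1 (hFpprop Q₀ hQ₀).2, Q₀, hQ₀, rfl⟩
      have hℳmax : ∀ H ∈ ℳ, H ∈ 𝒢 ∧ ∀ S ∈ 𝒢, ¬ cb H ⊂ cb S := fun H hH =>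
        Finset.mem_filter.mp hH
      have hgroup : ∑ Q ∈ Fp, tm u par Q =
          ∑ H ∈ ℳ, ∑ Q ∈ Fp.filter (fun Q => cb (par Q) ⊆ cb H), tm u par Q := by
        refine sum_group Fp ℳ _ _ ?_ ?_
        · intro Q hQ
          obtain ⟨R, ⟨hR1, hR2⟩, hR3⟩ :=
            exists_max_above 𝒢 (Finset.mem_image_of_mem par hQ)
          exact ⟨R, Finset.mem_filter.mpr ⟨hR1, hR2⟩, hR3⟩
        · intro Q hQ R hR R' hR' hp hp'
          by_contra hne
          have hd := max_disjoint hn 𝒢 (hℳmax R hR) (hℳmax R' hR') hne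
          obtain ⟨x, hx⟩ := cb_nonempty (par Q)
          exact (hd.ne_of_mem (hp hx) (hp' hx)) rfl
      rw [hgroup]
      calc ∑ H ∈ ℳ, ∑ Q ∈ Fp.filter (fun Q => cb (par Q) ⊆ cb H), tm u par Q
          ≤ ∑ H ∈ ℳ, ∫ x in cb H, u x ^ 2 := by
            refine Finset.sum_le_sum fun H hH => ?_
            have hHω := (h𝒢mem H (hℳmax H hH).1).1
            refine le_trans (lemB hn hpar hu _ _ le_rfl ?_ H hHω ?_) ?_
            · intro Q hQ
              exact hFpprop Q (Finset.mem_filter.mp hQ).1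
            · intro Q hQ
              exact (Finset.mem_filter.mp hQ).2
            · exact Iq_le_int_sq hu (volume_cb_ne_top H) (volume_cb_pos H)
        _ ≤ ∫ x, u x ^ 2 := by
            refine sum_int_sq_le hu ℳ (fun H => cb H) (fun H _ => measurableSet_cb H) ?_
            intro H hH H' hH' hne
            show Disjoint (cb H) (cb H')
            exact max_disjoint hn 𝒢 (hℳmax H (Finset.mem_coe.mp hH))
              (hℳmax H' (Finset.mem_coe.mp hH')) hne
    calc ENNReal.ofReal (∑ Q ∈ Fp, tm u par Q)
        ≤ ENNReal.ofReal (∫ x, u x ^ 2) := ENNReal.ofReal_le_ofReal hreal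
      _ = ∫⁻ x, ENNReal.ofReal (u x ^ 2) :=
          ofReal_integral_eq_lintegral_ofReal hu.integrable_sq
            (ae_of_all _ fun x => sq_nonneg _)
      _ = ∫⁻ x, (‖u x‖₊ : ℝ≥0∞) ^ 2 := by
          refine lintegral_congr fun x => ?_
          rw [← Real.enorm_eq_ofReal (sq_nonneg (u x)), ← ENNReal.coe_pow]
          norm_cast
          rw [← nnnorm_pow]; rfl
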